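/- Let ζ ∈ g satisfy the critical point condition [[ζ, θζ̄], ζ] = aζ with a ≠ 0 real, and suppose ζ ∈ p (so θζ = −ζ). Then ζ is K_R-conjugate to −ζ; specifically, Ad(exp(it[ζ, θζ̄]))(ζ) = e^{ita}ζ for t ∈ ℝ, the element exp(it[ζ, θζ̄]) lies in the maximal compact K_R when it[ζ, θζ̄] ∈ k_R, and choosing t = π/a gives Ad(exp(iπa^{-1}[ζ, θζ̄]))(ζ) = −ζ. -/

import Mathlib

open Matrix Complex

private lemma map_conj_eq {n : ℕ} (A : Matrix (Fin n) (Fin n) ℂ) :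
    A.map (starRingEnd ℂ) = (Aᴴ)ᵀ := by
  ext i j
  simp [Matrix.conjTranspose_apply]

/-- Matrix model (`θζ̄ = -star ζ`): let `ζ ∈ p` (symmetric:
`ζᵀ = ζ`) satisfy the critical eigenvector condition
`⁅⁅ζ, θζ̄⁆, ζ⁆ = aζ` with `a ∈ ℝ`, `a ≠ 0`.  Then:
(1) `Ad(exp(z·⁅ζ, θζ̄⁆))ζ = e^{za} ζ` for all `z ∈ ℂ`;
(2) for real `t`, the element `exp(it·⁅ζ, θζ̄⁆)` lies in the maximal compact
`K_R` — it is unitary and has real entries;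
(3) choosing `z = iπ/a` gives `Ad(exp(iπa⁻¹·⁅ζ, θζ̄⁆))ζ = -ζ`, so `ζ` is
`K_R`-conjugate to `-ζ`. -/
theorem stmt11 (n : ℕ) (ζ : Matrix (Fin n) (Fin n) ℂ) (hζ : ζ ≠ 0)
    (hζsym : ζᵀ = ζ) (a : ℝ) (ha : a ≠ 0)
    (hcrit : ⁅⁅ζ, -(star ζ)⁆, ζ⁆ = (a : ℂ) • ζ) :
    (∀ z : ℂ,
      NormedSpace.exp (z • ⁅ζ, -(star ζ)⁆) * ζ *
          NormedSpace.exp (-(z • ⁅ζ, -(star ζ)⁆))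
        = Complex.exp (z * a) • ζ) ∧
    (∀ t : ℝ,
      NormedSpace.exp ((Complex.I * t) • ⁅ζ, -(star ζ)⁆) ∈
          Matrix.unitaryGroup (Fin n) ℂ ∧
      (NormedSpace.exp ((Complex.I * t) • ⁅ζ, -(star ζ)⁆)).map (starRingEnd ℂ)
        = NormedSpace.exp ((Complex.I * t) • ⁅ζ, -(star ζ)⁆)) ∧
    NormedSpace.exp (((Real.pi * Complex.I) / a) • ⁅ζ, -(star ζ)⁆) * ζ *
        NormedSpace.exp (-(((Real.pi * Complex.I) / a) • ⁅ζ, -(star ζ)⁆))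
      = -ζ := by
  letI : SeminormedRing (Matrix (Fin n) (Fin n) ℂ) := Matrix.linftyOpSemiNormedRing
  letI : NormedRing (Matrix (Fin n) (Fin n) ℂ) := Matrix.linftyOpNormedRing
  letI : NormedAlgebra ℂ (Matrix (Fin n) (Fin n) ℂ) := Matrix.linftyOpNormedAlgebra
  letI : NormedAlgebra ℚ (Matrix (Fin n) (Fin n) ℂ) := NormedAlgebra.restrictScalars ℚ ℂ _
  set B : Matrix (Fin n) (Fin n) ℂ := ⁅ζ, -(star ζ)⁆ with hBdef
  -- B * ζ = ζ * (B + a • 1)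
  have hBζ : B * ζ = ζ * (B + (a : ℂ) • 1) := by
    have h := hcrit
    rw [Ring.lie_def (x := B)] at h
    have : B * ζ - ζ * B = (a : ℂ) • ζ := h
    have h2 : B * ζ = ζ * B + (a : ℂ) • ζ := by linear_combination (norm := noncomm_ring) this
    rw [h2, mul_add, mul_smul_comm, mul_one]
  -- key conjugation identity
  have key : ∀ z : ℂ,
      NormedSpace.exp (z • B) * ζ * NormedSpace.exp (-(z • B))
        = Complex.exp (z * a) • ζ := by
    intro z
    set D : Matrix (Fin n) (Fin n) ℂ := B + (a : ℂ) • 1 with hDdef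
    have hzBζ : (z • B) * ζ = ζ * (z • D) := by
      rw [smul_mul_assoc, hBζ, mul_smul_comm]
    have hpow : ∀ k : ℕ, (z • B) ^ k * ζ = ζ * (z • D) ^ k := by
      intro k
      induction k with
      | zero => simp
      | succ k ih =>
        rw [pow_succ, mul_assoc, pow_succ, ← mul_assoc ζ, ← ih, mul_assoc, hzBζ, ← mul_assoc]
    have h1 : NormedSpace.exp (z • B) * ζ = ζ * NormedSpace.exp (z • D) := by
      rw [NormedSpace.exp_eq_tsum (𝕂 := ℂ)]
      erw [((NormedSpace.expSeries_summable' (𝕂 := ℂ) (z • B)).tsum_mul_right ζ).symm]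
      erw [((NormedSpace.expSeries_summable' (𝕂 := ℂ) (z • D)).tsum_mul_left ζ).symm]
      exact tsum_congr fun k => by rw [smul_mul_assoc, hpow k, mul_smul_comm]
    have hsplit : z • D = z • B + (z * a) • (1 : Matrix (Fin n) (Fin n) ℂ) := by
      rw [hDdef, smul_add, smul_smul]
    have hcomm : Commute (z • B) ((z * a) • (1 : Matrix (Fin n) (Fin n) ℂ)) :=
      (Commute.one_right (z • B)).smul_right _
    have hexp1 : NormedSpace.exp ((z * a) • (1 : Matrix (Fin n) (Fin n) ℂ))
        = Complex.exp (z * a) • (1 : Matrix (Fin n) (Fin n) ℂ) := by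
      have := NormedSpace.algebraMap_exp_comm (𝕂 := ℂ) (𝔸 := Matrix (Fin n) (Fin n) ℂ) (z * a)
      rw [Algebra.algebraMap_eq_smul_one, Algebra.algebraMap_eq_smul_one] at this
      rw [Complex.exp_eq_exp_ℂ, this]
      rfl
    have h2 : NormedSpace.exp (z • D)
        = Complex.exp (z * a) • NormedSpace.exp (z • B) := by
      erw [hsplit, NormedSpace.exp_add_of_commute hcomm, hexp1, mul_smul_comm, mul_one]
      rfl
    have h3 : NormedSpace.exp (z • B) * NormedSpace.exp (-(z • B)) = 1 := by
      erw [← NormedSpace.exp_add_of_commute ((Commute.refl (z • B)).neg_right), add_neg_cancel,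
        NormedSpace.exp_zero]
    calc NormedSpace.exp (z • B) * ζ * NormedSpace.exp (-(z • B))
        = ζ * NormedSpace.exp (z • D) * NormedSpace.exp (-(z • B)) := by rw [h1]
      _ = Complex.exp (z * a) • (ζ * (NormedSpace.exp (z • B) * NormedSpace.exp (-(z • B)))) := by
          rw [h2, mul_smul_comm, smul_mul_assoc, mul_assoc]
      _ = Complex.exp (z * a) • ζ := by rw [h3, mul_one]
  -- B is Hermitian
  have hts : (ζᴴ)ᵀ = ζᴴ := by
    ext i j
    have : ζ i j = ζ j i := by
      conv_lhs => rw [← hζsym]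
      rw [Matrix.transpose_apply]
    simp [Matrix.conjTranspose_apply, this]
  have hBstar : Bᴴ = B := by
    rw [hBdef, Ring.lie_def]
    simp only [Matrix.conjTranspose_sub, Matrix.conjTranspose_mul, Matrix.conjTranspose_neg,
      Matrix.conjTranspose_conjTranspose, Matrix.star_eq_conjTranspose]
    noncomm_ring
  -- B is antisymmetric
  have hBt : Bᵀ = -B := by
    rw [hBdef, Ring.lie_def]
    simp only [Matrix.transpose_sub, Matrix.transpose_mul, Matrix.transpose_neg,
      Matrix.star_eq_conjTranspose, hts, hζsym]
    noncomm_ring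
  refine ⟨key, fun t => ?_, ?_⟩
  · set M : Matrix (Fin n) (Fin n) ℂ := (Complex.I * t) • B with hMdef
    have hMstar : Mᴴ = -M := by
      rw [hMdef, Matrix.conjTranspose_smul, hBstar, ← neg_smul]
      congr 1
      simp
    constructor
    · erw [Matrix.mem_unitaryGroup_iff, Matrix.star_eq_conjTranspose,
        ← Matrix.exp_conjTranspose, hMstar,
        ← NormedSpace.exp_add_of_commute ((Commute.refl M).neg_right), add_neg_cancel,
        NormedSpace.exp_zero]
    · have hMt : Mᵀ = -M := by
        rw [hMdef, Matrix.transpose_smul, hBt, smul_neg]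
      rw [map_conj_eq, ← Matrix.exp_conjTranspose, ← Matrix.exp_transpose, hMstar]
      congr 1
      rw [Matrix.transpose_neg, hMt, neg_neg]
  · have h := key ((Real.pi * Complex.I) / a)
    have haC : (a : ℂ) ≠ 0 := Complex.ofReal_ne_zero.mpr ha
    rw [div_mul_cancel₀ _ haC, Complex.exp_pi_mul_I, neg_smul, one_smul] at h
    exact h
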